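/- For every n ≥ 1, the von Neumann entropy of the decoherence matrix restricted to A₁^{(n)} satisfies the exact formula S_{A₁^{(n)}} = (n−1)·|p log₂ p + q log₂ q| + |p₀ log₂ p₀ + q₀ log₂ q₀| (with the convention 0·log₂ 0 = 0). -/

import Mathlib

open Matrix Filter
open scoped BigOperators Classical

noncomputable section

/-- Index in `Fin 2` of a direction: `false` ↔ `-1` (index `0`), `true` ↔ `1` (index `1`). -/
def bidx (b : Bool) : Fin 2 := if b then 1 else 0

/-- The standard basis vector `e_j`, `j ∈ {-1,1}`, of `ℂ²`. -/
def eVec (b : Bool) : Fin 2 → ℂ := fun i => if i = bidx b then 1 else 0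

/-- The projection `e_j e_j†`. -/
def projC (b : Bool) : Matrix (Fin 2) (Fin 2) ℂ :=
  Matrix.single (bidx b) (bidx b) 1

/-- `P_j = e_j e_j† U`. -/
def pMat (U : Matrix (Fin 2) (Fin 2) ℂ) (b : Bool) : Matrix (Fin 2) (Fin 2) ℂ :=
  projC b * U

/-- The weight of a path `ξ = (ξ_n, …, ξ_1)` (here `ξ i` is step `i+1`):
`w(ξ) = P_{ξ_n} ⋯ P_{ξ_1} φ₀`. -/
def weight (U : Matrix (Fin 2) (Fin 2) ℂ) (φ₀ : Fin 2 → ℂ) {n : ℕ} (ξ : Fin n → Bool) :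
    Fin 2 → ℂ :=
  ((List.ofFn fun i => pMat U (ξ i)).reverse.prod).mulVec φ₀

/-- The complex inner product `⟨v, w⟩`, conjugate-linear in the first slot. -/
def cdot (v w : Fin 2 → ℂ) : ℂ := ∑ i, (starRingEnd ℂ) (v i) * w i

/-- The decoherence matrix restricted to a set `A` of pairs of paths. -/
def decMat (U : Matrix (Fin 2) (Fin 2) ℂ) (φ₀ : Fin 2 → ℂ) {n : ℕ}
    (A : Set ((Fin n → Bool) × (Fin n → Bool))) :
    Matrix (Fin n → Bool) (Fin n → Bool) ℂ :=
  Matrix.of fun ξ η =>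
    if (ξ, η) ∈ A then cdot (weight U φ₀ ξ) (weight U φ₀ η) else 0

/-- `ξ_1 + ⋯ + ξ_n ∈ ℤ`, each step being `±1`. -/
def pathSum {n : ℕ} (ξ : Fin n → Bool) : ℤ := ∑ i, (if ξ i then 1 else -1)

/-- `A₀^{(n)}`: pairs of paths with the same final direction (paths have length `n+1`). -/
def A0 (n : ℕ) : Set ((Fin (n+1) → Bool) × (Fin (n+1) → Bool)) :=
  {x | x.1 (Fin.last n) = x.2 (Fin.last n)}

/-- `A_P^{(n)}`: pairs of paths with the same final direction and the same endpoint. -/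
def AP (n : ℕ) : Set ((Fin (n+1) → Bool) × (Fin (n+1) → Bool)) :=
  {x | x.1 (Fin.last n) = x.2 (Fin.last n) ∧ pathSum x.1 = pathSum x.2}

/-- `A₁^{(n)}`: the diagonal pairs. -/
def A1 (n : ℕ) : Set ((Fin (n+1) → Bool) × (Fin (n+1) → Bool)) :=
  {x | x.1 = x.2}

/-- The von Neumann entropy `S(D) = −Σᵢ λᵢ log₂ λᵢ`, summing over the eigenvalues with
multiplicity (the roots of the characteristic polynomial; they are real for a PSD Hermitian
matrix), with the convention `0 · log₂ 0 = 0`. -/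
def vnEntropy {I : Type*} [Fintype I] [DecidableEq I] (D : Matrix I I ℂ) : ℝ :=
  -((D.charpoly.roots).map fun lam => lam.re * Real.logb 2 lam.re).sum

/-- The real projection `e_j e_j†`. -/
def projR (b : Bool) : Matrix (Fin 2) (Fin 2) ℝ :=
  Matrix.single (bidx b) (bidx b) 1

/-- The stochastic matrix `M = [[p, q], [q, p]]` of the correlated random walk, `q = 1 − p`. -/
def rwM (p : ℝ) : Matrix (Fin 2) (Fin 2) ℝ := !![p, 1-p; 1-p, p]

/-- The initial vector `φ = (q₀, p₀)ᵀ` of the correlated random walk, `q₀ = 1 − p₀`. -/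
def rwφ (p₀ : ℝ) : Fin 2 → ℝ := ![1 - p₀, p₀]

/-- `P̃_{ξ_n} ⋯ P̃_{ξ_2} φ_{ξ_1}`, where `P̃_j = e_j e_j† M` and `φ_j = e_j e_j† φ`. -/
def rwVec (p p₀ : ℝ) : {n : ℕ} → (Fin n → Bool) → (Fin 2 → ℝ)
  | 0, _ => rwφ p₀
  | n + 1, ξ =>
      ((List.ofFn fun i : Fin n => projR (ξ i.succ) * rwM p).reverse.prod).mulVec
        ((projR (ξ 0)).mulVec (rwφ p₀))

/-- `p_L^{(n)}(j)`: the probability that the `(p₀,p)`-correlated random walk is at `j`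
at time `n`, having arrived from the left. -/
def pL (p p₀ : ℝ) (n : ℕ) (j : ℤ) : ℝ :=
  ∑ ξ ∈ Finset.univ.filter (fun ξ : Fin n → Bool => pathSum ξ = j), rwVec p p₀ ξ 0

/-- `p_R^{(n)}(j)`: the probability that the `(p₀,p)`-correlated random walk is at `j`
at time `n`, having arrived from the right. -/
def pR (p p₀ : ℝ) (n : ℕ) (j : ℤ) : ℝ :=
  ∑ ξ ∈ Finset.univ.filter (fun ξ : Fin n → Bool => pathSum ξ = j), rwVec p p₀ ξ 1

lemma proj_mulVec (b : Bool) (v : Fin 2 → ℂ) :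
    (projC b).mulVec v = fun i => if i = bidx b then v (bidx b) else 0 := by
  ext i
  simp [projC, Matrix.mulVec, Matrix.single, dotProduct, ite_and, eq_comm]

lemma pMat_mulVec (U : Matrix (Fin 2) (Fin 2) ℂ) (b : Bool) (v : Fin 2 → ℂ) :
    (pMat U b).mulVec v = fun i => if i = bidx b then (U.mulVec v) (bidx b) else 0 := by
  rw [pMat, ← Matrix.mulVec_mulVec, proj_mulVec]

lemma weight_succ (U : Matrix (Fin 2) (Fin 2) ℂ) (φ₀ : Fin 2 → ℂ) {m : ℕ}
    (ξ : Fin (m + 1) → Bool) :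
    weight U φ₀ ξ = (pMat U (ξ (Fin.last m))).mulVec (weight U φ₀ (Fin.init ξ)) := by
  unfold weight
  rw [List.ofFn_succ', List.concat_eq_append, List.reverse_append, List.reverse_singleton,
    List.singleton_append, List.prod_cons, ← Matrix.mulVec_mulVec]
  rfl

lemma weight_one (U : Matrix (Fin 2) (Fin 2) ℂ) (φ₀ : Fin 2 → ℂ) (ξ : Fin 1 → Bool) :
    weight U φ₀ ξ = (pMat U (ξ 0)).mulVec φ₀ := by
  unfold weight
  simp

def tpr (p : ℝ) (b b' : Bool) : ℝ := if b = b' then p else 1 - p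

def ppr (p p₀ : ℝ) : {m : ℕ} → (Fin (m + 1) → Bool) → ℝ
  | 0, ξ => if ξ 0 then p₀ else 1 - p₀
  | _ + 1, ξ =>
      ppr p p₀ (Fin.init ξ) * tpr p (ξ (Fin.last _)) (Fin.init ξ (Fin.last _))

lemma weight_struct (a b c d α β : ℂ)
    (hU : !![a, b; c, d] ∈ Matrix.unitaryGroup (Fin 2) ℂ)
    (hφ : ‖α‖ ^ 2 + ‖β‖ ^ 2 = 1)
    (p p₀ : ℝ) (hp : p = ‖a‖ ^ 2) (hp₀ : p₀ = ‖c * α + d * β‖ ^ 2) :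
    ∀ {m : ℕ} (ξ : Fin (m + 1) → Bool), ∃ s : ℂ,
      weight !![a, b; c, d] ![α, β] ξ = (fun i => if i = bidx (ξ (Fin.last m)) then s else 0) ∧
      Complex.normSq s = ppr p p₀ ξ := by
  have h1 : star !![a, b; c, d] * !![a, b; c, d] = 1 := Matrix.mem_unitaryGroup_iff'.mp hU
  have h2 : !![a, b; c, d] * star !![a, b; c, d] = 1 := Matrix.mem_unitaryGroup_iff.mp hU
  have e1 := congrFun (congrFun h1 0) 0
  have e2 := congrFun (congrFun h1 1) 1
  have e3 := congrFun (congrFun h1 0) 1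
  have e4 := congrFun (congrFun h2 0) 0
  simp [Matrix.mul_apply, Fin.sum_univ_two, Matrix.one_apply, Matrix.star_eq_conjTranspose,
    Matrix.conjTranspose_apply] at e1 e2 e3 e4
  have ha2 : Complex.normSq a = p := by rw [hp, Complex.sq_norm]
  have hA : (Complex.normSq a : ℂ) + Complex.normSq c = 1 := by
    rw [Complex.normSq_eq_conj_mul_self, Complex.normSq_eq_conj_mul_self]; exact e1
  have hB : (Complex.normSq b : ℂ) + Complex.normSq d = 1 := by
    rw [Complex.normSq_eq_conj_mul_self, Complex.normSq_eq_conj_mul_self]; exact e2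
  have hC : (Complex.normSq a : ℂ) + Complex.normSq b = 1 := by
    rw [Complex.normSq_eq_conj_mul_self, Complex.normSq_eq_conj_mul_self]
    linear_combination e4
  have hAr : Complex.normSq a + Complex.normSq c = 1 := by exact_mod_cast hA
  have hBr : Complex.normSq b + Complex.normSq d = 1 := by exact_mod_cast hB
  have hCr : Complex.normSq a + Complex.normSq b = 1 := by exact_mod_cast hC
  have hb2 : Complex.normSq b = 1 - p := by linarith
  have hc2 : Complex.normSq c = 1 - p := by linarith
  have hd2 : Complex.normSq d = p := by linarith
  have hent : ∀ b1 b2 : Bool,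
      Complex.normSq (!![a, b; c, d] (bidx b1) (bidx b2)) = tpr p b1 b2 := by
    intro b1 b2
    cases b1 <;> cases b2 <;>
      simp [bidx, tpr, ha2, hb2, hc2, hd2]
  have e3c : a * (starRingEnd ℂ) b + c * (starRingEnd ℂ) d = 0 := by
    have := congrArg (starRingEnd ℂ) e3
    simpa [map_add, RingHom.map_mul] using this
  have hφ' : (Complex.normSq α : ℂ) + Complex.normSq β = 1 := by
    have : Complex.normSq α + Complex.normSq β = 1 := by
      rw [← Complex.sq_norm, ← Complex.sq_norm]; exact hφ
    exact_mod_cast this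
  have key : (Complex.normSq (a * α + b * β) : ℂ) + Complex.normSq (c * α + d * β) = 1 := by
    rw [Complex.normSq_eq_conj_mul_self, Complex.normSq_eq_conj_mul_self] at hφ'
    rw [Complex.normSq_eq_conj_mul_self, Complex.normSq_eq_conj_mul_self]
    simp only [map_add, RingHom.map_mul]
    linear_combination ((starRingEnd ℂ) α * α) * e1 + ((starRingEnd ℂ) β * β) * e2 +
      ((starRingEnd ℂ) α * β) * e3 + (α * (starRingEnd ℂ) β) * e3c + hφ'
  have hp₀' : Complex.normSq (c * α + d * β) = p₀ := by rw [hp₀, Complex.sq_norm]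
  have keyr : Complex.normSq (a * α + b * β) + Complex.normSq (c * α + d * β) = 1 := by
    exact_mod_cast key
  intro m
  induction m with
  | zero =>
    intro ξ
    rw [weight_one, pMat_mulVec]
    refine ⟨(!![a, b; c, d].mulVec ![α, β]) (bidx (ξ 0)), ?_, ?_⟩
    · have : Fin.last 0 = 0 := rfl
      rw [this]
    · have hv0 : (!![a, b; c, d].mulVec ![α, β]) 0 = a * α + b * β := by
        simp [Matrix.mulVec, dotProduct, Fin.sum_univ_two]
      have hv1 : (!![a, b; c, d].mulVec ![α, β]) 1 = c * α + d * β := by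
        simp [Matrix.mulVec, dotProduct, Fin.sum_univ_two]
      cases hb0 : ξ 0
      · have hbb : bidx false = 0 := rfl
        rw [hbb, hv0]
        simp only [ppr, hb0, Bool.false_eq_true, if_false, ite_false]
        linarith
      · have hbb : bidx true = 1 := rfl
        rw [hbb, hv1, hp₀']
        simp [ppr, hb0]
  | succ m IH =>
    intro ξ
    obtain ⟨s, hs, hns⟩ := IH (Fin.init ξ)
    rw [weight_succ, hs, pMat_mulVec]
    have hsingle : (fun i => if i = bidx (Fin.init ξ (Fin.last m)) then s else 0) =
        Pi.single (bidx (Fin.init ξ (Fin.last m))) s := by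
      funext i
      rw [Pi.single_apply]
    refine ⟨!![a, b; c, d] (bidx (ξ (Fin.last (m + 1)))) (bidx (Fin.init ξ (Fin.last m))) * s,
      ?_, ?_⟩
    · funext i
      rw [hsingle, Matrix.mulVec_single]
      simp [Matrix.col_apply, op_smul_eq_mul]
    · rw [Complex.normSq_mul, hent, hns]
      show _ = ppr p p₀ (Fin.init ξ) * tpr p (ξ (Fin.last (m + 1))) (Fin.init ξ (Fin.last m))
      ring

lemma ppr_snoc (p p₀ : ℝ) {m : ℕ} (ξ : Fin (m + 1) → Bool) (b : Bool) :
    ppr p p₀ (Fin.snoc ξ b) = ppr p p₀ ξ * tpr p b (ξ (Fin.last m)) := by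
  simp only [ppr, Fin.init_snoc, Fin.snoc_last]

lemma sum_snoc {M : Type*} [AddCommMonoid M] {m : ℕ} (g : (Fin (m + 2) → Bool) → M) :
    ∑ ξ : Fin (m + 2) → Bool, g ξ = ∑ ξ : Fin (m + 1) → Bool, ∑ b : Bool, g (Fin.snoc ξ b) := by
  rw [← (Fin.snocEquiv (fun _ => Bool)).sum_comp g, Fintype.sum_prod_type, Finset.sum_comm]
  rfl

lemma sum_base {M : Type*} [AddCommMonoid M] (g : (Fin 1 → Bool) → M) :
    ∑ ξ : Fin 1 → Bool, g ξ = g (fun _ => false) + g (fun _ => true) := by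
  rw [← (Equiv.funUnique (Fin 1) Bool).symm.sum_comp g, Fintype.sum_bool]
  rw [add_comm]
  rfl

lemma sum_tpr (p : ℝ) (b' : Bool) : ∑ b : Bool, tpr p b b' = 1 := by
  rw [Fintype.sum_bool]
  cases b' <;> simp [tpr]

lemma sum_tpr_logb (p : ℝ) (b' : Bool) :
    ∑ b : Bool, tpr p b b' * Real.logb 2 (tpr p b b') =
      p * Real.logb 2 p + (1 - p) * Real.logb 2 (1 - p) := by
  rw [Fintype.sum_bool]
  cases b' <;> simp [tpr] <;> ring

lemma ppr_nonneg {p p₀ : ℝ} (h0 : 0 ≤ p) (h1 : p ≤ 1) (h0' : 0 ≤ p₀) (h1' : p₀ ≤ 1) :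
    ∀ {m : ℕ} (ξ : Fin (m + 1) → Bool), 0 ≤ ppr p p₀ ξ := by
  intro m
  induction m with
  | zero => intro ξ; simp only [ppr]; split <;> linarith
  | succ m IH =>
    intro ξ
    refine mul_nonneg (IH _) ?_
    unfold tpr; split <;> linarith

lemma sum_ppr (p p₀ : ℝ) : ∀ (m : ℕ), ∑ ξ : Fin (m + 1) → Bool, ppr p p₀ ξ = 1 := by
  intro m
  induction m with
  | zero =>
    rw [sum_base]
    simp [ppr]
  | succ m IH =>
    rw [sum_snoc]
    have : ∀ ξ : Fin (m + 1) → Bool, ∑ b : Bool, ppr p p₀ (Fin.snoc ξ b) = ppr p p₀ ξ := by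
      intro ξ
      simp only [ppr_snoc, ← Finset.mul_sum, sum_tpr, mul_one]
    simp only [this, IH]

lemma sum_ppr_logb {p p₀ : ℝ} (h0 : 0 < p) (h1 : p < 1) (h0' : 0 ≤ p₀) (h1' : p₀ ≤ 1) :
    ∀ (m : ℕ), ∑ ξ : Fin (m + 1) → Bool, ppr p p₀ ξ * Real.logb 2 (ppr p p₀ ξ) =
      m * (p * Real.logb 2 p + (1 - p) * Real.logb 2 (1 - p)) +
        (p₀ * Real.logb 2 p₀ + (1 - p₀) * Real.logb 2 (1 - p₀)) := by
  intro m
  induction m with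
  | zero =>
    rw [sum_base]
    simp [ppr]
    ring
  | succ m IH =>
    rw [sum_snoc]
    have key : ∀ (ξ : Fin (m + 1) → Bool) (b : Bool),
        ppr p p₀ (Fin.snoc ξ b) * Real.logb 2 (ppr p p₀ (Fin.snoc ξ b)) =
          (ppr p p₀ ξ * Real.logb 2 (ppr p p₀ ξ)) * tpr p b (ξ (Fin.last m)) +
            ppr p p₀ ξ * (tpr p b (ξ (Fin.last m)) * Real.logb 2 (tpr p b (ξ (Fin.last m)))) := by
      intro ξ b
      rw [ppr_snoc]
      rcases eq_or_lt_of_le (ppr_nonneg h0.le h1.le h0' h1' ξ) with h | h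
      · rw [← h]; ring
      · have ht : 0 < tpr p b (ξ (Fin.last m)) := by unfold tpr; split <;> linarith
        rw [Real.logb_mul h.ne' ht.ne']
        ring
    have step : ∀ ξ : Fin (m + 1) → Bool,
        ∑ b : Bool, ppr p p₀ (Fin.snoc ξ b) * Real.logb 2 (ppr p p₀ (Fin.snoc ξ b)) =
          ppr p p₀ ξ * Real.logb 2 (ppr p p₀ ξ) +
            ppr p p₀ ξ * (p * Real.logb 2 p + (1 - p) * Real.logb 2 (1 - p)) := by
      intro ξ
      simp only [key]
      rw [Finset.sum_add_distrib, ← Finset.mul_sum, ← Finset.mul_sum, sum_tpr, sum_tpr_logb,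
        mul_one]
    rw [Finset.sum_congr rfl (fun ξ _ => step ξ), Finset.sum_add_distrib, IH, ← Finset.sum_mul,
      sum_ppr, one_mul]
    push_cast
    ring

open Polynomial in
lemma charpoly_roots_diagonal {I : Type*} [Fintype I] [DecidableEq I] (f : I → ℂ) :
    (Matrix.diagonal f).charpoly.roots = Finset.univ.val.map f := by
  have h : (Matrix.diagonal f).charpoly = ∏ i, (X - C (f i)) := by
    rw [Matrix.charpoly, show charmatrix (Matrix.diagonal f) =
      Matrix.diagonal (fun i => (X : ℂ[X]) - C (f i)) from ?_, Matrix.det_diagonal]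
    ext i j
    by_cases hij : i = j
    · subst hij; rw [charmatrix_apply_eq, Matrix.diagonal_apply_eq, Matrix.diagonal_apply_eq]
    · rw [charmatrix_apply_ne _ _ _ hij, Matrix.diagonal_apply_ne _ hij,
        Matrix.diagonal_apply_ne _ hij, map_zero, neg_zero]
  rw [h, ← Polynomial.roots_multiset_prod_X_sub_C (Finset.univ.val.map f)]
  congr 1
  rw [Multiset.map_map, Finset.prod_eq_multiset_prod]
  rfl

lemma cdot_self_support (j : Fin 2) (s : ℂ) :
    cdot (fun i => if i = j then s else 0) (fun i => if i = j then s else 0) =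
      (Complex.normSq s : ℂ) := by
  fin_cases j <;>
    simp [cdot, Fin.sum_univ_two, Complex.normSq_eq_conj_mul_self]

lemma vnEntropy_diagonal {I : Type*} [Fintype I] [DecidableEq I] (f : I → ℝ) :
    vnEntropy (Matrix.diagonal (fun i => (f i : ℂ))) =
      -∑ i, f i * Real.logb 2 (f i) := by
  rw [vnEntropy, charpoly_roots_diagonal, Multiset.map_map]
  rfl


/-- `S_{A₁^{(n)}} = (n−1)|p log₂ p + q log₂ q| + |p₀ log₂ p₀ + q₀ log₂ q₀|`
(paths of length `n+1`, so the first factor is `n`). -/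
theorem vnEntropy_decMat_A1
    (a b c d α β : ℂ)
    (hU : !![a, b; c, d] ∈ Matrix.unitaryGroup (Fin 2) ℂ)
    (habcd : a * b * c * d ≠ 0)
    (hφ : ‖α‖ ^ 2 + ‖β‖ ^ 2 = 1)
    (p q p₀ q₀ : ℝ)
    (hp : p = ‖a‖ ^ 2) (hq : q = 1 - p)
    (hp₀ : p₀ = ‖c * α + d * β‖ ^ 2) (hq₀ : q₀ = 1 - p₀)
    (n : ℕ) :
    vnEntropy (decMat !![a, b; c, d] ![α, β] (A1 n)) =
      n * |p * Real.logb 2 p + q * Real.logb 2 q| +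
        |p₀ * Real.logb 2 p₀ + q₀ * Real.logb 2 q₀| := by

  -- basic norm facts
  have h1 : star !![a, b; c, d] * !![a, b; c, d] = 1 := Matrix.mem_unitaryGroup_iff'.mp hU
  have h2 : !![a, b; c, d] * star !![a, b; c, d] = 1 := Matrix.mem_unitaryGroup_iff.mp hU
  have e1 := congrFun (congrFun h1 0) 0
  have e2 := congrFun (congrFun h1 1) 1
  have e3 := congrFun (congrFun h1 0) 1
  have e4 := congrFun (congrFun h2 0) 0
  simp [Matrix.mul_apply, Fin.sum_univ_two, Matrix.one_apply, Matrix.star_eq_conjTranspose,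
    Matrix.conjTranspose_apply] at e1 e2 e3 e4
  have hC : (Complex.normSq a : ℂ) + Complex.normSq b = 1 := by
    rw [Complex.normSq_eq_conj_mul_self, Complex.normSq_eq_conj_mul_self]
    linear_combination e4
  have hCr : Complex.normSq a + Complex.normSq b = 1 := by exact_mod_cast hC
  have e3c : a * (starRingEnd ℂ) b + c * (starRingEnd ℂ) d = 0 := by
    have := congrArg (starRingEnd ℂ) e3
    simpa [map_add, RingHom.map_mul] using this
  have hφ' : (Complex.normSq α : ℂ) + Complex.normSq β = 1 := by
    have : Complex.normSq α + Complex.normSq β = 1 := by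
      rw [← Complex.sq_norm, ← Complex.sq_norm]; exact hφ
    exact_mod_cast this
  have key : (Complex.normSq (a * α + b * β) : ℂ) + Complex.normSq (c * α + d * β) = 1 := by
    rw [Complex.normSq_eq_conj_mul_self, Complex.normSq_eq_conj_mul_self] at hφ'
    rw [Complex.normSq_eq_conj_mul_self, Complex.normSq_eq_conj_mul_self]
    simp only [map_add, RingHom.map_mul]
    linear_combination ((starRingEnd ℂ) α * α) * e1 + ((starRingEnd ℂ) β * β) * e2 +
      ((starRingEnd ℂ) α * β) * e3 + (α * (starRingEnd ℂ) β) * e3c + hφ'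
  have keyr : Complex.normSq (a * α + b * β) + Complex.normSq (c * α + d * β) = 1 := by
    exact_mod_cast key
  have ha0 : a ≠ 0 := by intro h; apply habcd; rw [h]; ring
  have hb0 : b ≠ 0 := by intro h; apply habcd; rw [h]; ring
  have hppos : 0 < p := by
    rw [hp]; exact pow_pos (norm_pos_iff.mpr ha0) 2
  have hplt : p < 1 := by
    have : 0 < Complex.normSq b := Complex.normSq_pos.mpr hb0
    have hpa : Complex.normSq a = p := by rw [hp, Complex.sq_norm]
    linarith
  have hp₀0 : 0 ≤ p₀ := by rw [hp₀]; positivity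
  have hp₀1 : p₀ ≤ 1 := by
    have h1' : 0 ≤ Complex.normSq (a * α + b * β) := Complex.normSq_nonneg _
    have hpa : Complex.normSq (c * α + d * β) = p₀ := by rw [hp₀, Complex.sq_norm]
    linarith
  -- diagonalization
  have hdiag : decMat !![a, b; c, d] ![α, β] (A1 n) =
      Matrix.diagonal (fun ξ => ((ppr p p₀ ξ : ℝ) : ℂ)) := by
    ext ξ η
    by_cases hξη : ξ = η
    · subst hξη
      obtain ⟨s, hs, hns⟩ := weight_struct a b c d α β hU hφ p p₀ hp hp₀ ξ
      simp only [decMat, A1, Matrix.of_apply, Set.mem_setOf_eq, if_pos rfl,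
        Matrix.diagonal_apply_eq]
      rw [hs, cdot_self_support, hns]
      simp
    · simp only [decMat, A1, Matrix.of_apply, Set.mem_setOf_eq, Matrix.diagonal_apply_ne _ hξη,
        if_neg hξη]
  rw [hdiag, vnEntropy_diagonal,
    sum_ppr_logb hppos hplt hp₀0 hp₀1 n]
  -- final arithmetic
  have hXle : p * Real.logb 2 p + (1 - p) * Real.logb 2 (1 - p) ≤ 0 := by
    have l1 : Real.logb 2 p ≤ 0 := Real.logb_nonpos one_lt_two hppos.le hplt.le
    have l2 : Real.logb 2 (1 - p) ≤ 0 := Real.logb_nonpos one_lt_two (by linarith) (by linarith)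
    nlinarith
  have hYle : p₀ * Real.logb 2 p₀ + (1 - p₀) * Real.logb 2 (1 - p₀) ≤ 0 := by
    have l1 : Real.logb 2 p₀ ≤ 0 := Real.logb_nonpos one_lt_two hp₀0 hp₀1
    have l2 : Real.logb 2 (1 - p₀) ≤ 0 := Real.logb_nonpos one_lt_two (by linarith) (by linarith)
    nlinarith
  rw [hq, hq₀, abs_of_nonpos hXle, abs_of_nonpos hYle]
  ring
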